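/- Let Γ be a finite n-player normal-form game and let x ∈ X. For ξ ∈ [0, 1], define the profile w_ξ ∈ X by w_ξ^i = (1 − ξ)·x^i + ξ·Uniform(A^i) for players i ∈ UnSat(x), and w_ξ^i = x^i for players i ∈ Sat(x). Then there exists ξ̄ > 0 such that for every ξ ∈ (0, ξ̄), the profile w_ξ belongs to NoBetter(x); in particular, every player unsatisfied at x remains unsatisfied at w_ξ, and w_ξ^i is fully mixed (assigns positive probability to every action of A^i) for each i ∈ UnSat(x). -/

import Mathlib

open Finset Function

variable {n : ℕ} {A : Fin n → Type*} [∀ i, Fintype (A i)]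

/-- `x` is a mixed strategy profile: each component lies in the probability simplex. -/
def IsProfile (x : ∀ i, A i → ℝ) : Prop :=
  ∀ i, x i ∈ stdSimplex ℝ (A i)

/-- Player `i`'s expected reward `R^i(x) = Σ_a r^i(a) ∏_j x^j(a^j)`. -/
noncomputable def expReward (r : Fin n → (∀ i, A i) → ℝ) (i : Fin n)
    (x : ∀ j, A j → ℝ) : ℝ :=
  ∑ a : ∀ j, A j, r i a * ∏ j, x j (a j)

/-- `y` is a best response for player `i` to the strategies `x^{-i}` of the others. -/
def IsBestResponse (r : Fin n → (∀ i, A i) → ℝ) (i : Fin n)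
    (y : A i → ℝ) (x : ∀ j, A j → ℝ) : Prop :=
  y ∈ stdSimplex ℝ (A i) ∧
    ∀ z ∈ stdSimplex ℝ (A i),
      expReward r i (Function.update x i z) ≤ expReward r i (Function.update x i y)

/-- Nash equilibrium: every player best responds. -/
def IsNash (r : Fin n → (∀ i, A i) → ℝ) (x : ∀ j, A j → ℝ) : Prop :=
  ∀ i, IsBestResponse r i (x i) x

-- The pure strategy `δ_a` placing probability 1 on action `a`.
open Classical in
noncomputable def pureStrat (i : Fin n) (a : A i) : A i → ℝ :=
  fun b => if b = a then 1 else 0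

/-- The set of satisfied players at `x`. -/
def Sat (r : Fin n → (∀ i, A i) → ℝ) (x : ∀ j, A j → ℝ) : Set (Fin n) :=
  {i | IsBestResponse r i (x i) x}

/-- The set of unsatisfied players at `x`. -/
def UnSat (r : Fin n → (∀ i, A i) → ℝ) (x : ∀ j, A j → ℝ) : Set (Fin n) :=
  (Sat r x)ᶜ

/-- Profiles accessible from `x`: satisfied players keep their strategies. -/
def Access (r : Fin n → (∀ i, A i) → ℝ) (x : ∀ j, A j → ℝ) :
    Set (∀ j, A j → ℝ) :=
  {y | IsProfile y ∧ ∀ i ∈ Sat r x, y i = x i}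

/-- Accessible profiles at which all previously unsatisfied players remain unsatisfied. -/
def NoBetter (r : Fin n → (∀ i, A i) → ℝ) (x : ∀ j, A j → ℝ) :
    Set (∀ j, A j → ℝ) :=
  {y ∈ Access r x | UnSat r x ⊆ UnSat r y}

/-- Accessible profiles strictly growing the set of unsatisfied players. -/
def Worse (r : Fin n → (∀ i, A i) → ℝ) (x : ∀ j, A j → ℝ) :
    Set (∀ j, A j → ℝ) :=
  {y ∈ NoBetter r x | UnSat r x ⊂ UnSat r y}

-- The profile `w_ξ`: unsatisfied players mix their strategy with the uniform one.
open Classical in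
noncomputable def wProfile (r : Fin n → (∀ i, A i) → ℝ) (x : ∀ j, A j → ℝ)
    (ξ : ℝ) : ∀ i, A i → ℝ :=
  fun i => if IsBestResponse r i (x i) x then x i
    else fun a => (1 - ξ) * x i a + ξ * ((Fintype.card (A i) : ℝ))⁻¹


private lemma wProfile_zero (r : Fin n → (∀ i, A i) → ℝ) (x : ∀ j, A j → ℝ) :
    wProfile r x 0 = x := by
  funext j
  unfold wProfile
  by_cases h : IsBestResponse r j (x j) x <;> simp [h]

private lemma cont_w (r : Fin n → (∀ i, A i) → ℝ) (x : ∀ j, A j → ℝ)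
    (j : Fin n) (b : A j) : Continuous fun ξ : ℝ => wProfile r x ξ j b := by
  unfold wProfile
  by_cases h : IsBestResponse r j (x j) x <;> simp only [h, if_true, if_false] <;> fun_prop

private lemma cont_exp (r : Fin n → (∀ i, A i) → ℝ) (x : ∀ j, A j → ℝ)
    (i k : Fin n) (z : A i → ℝ) :
    Continuous fun ξ : ℝ => expReward r k (Function.update (wProfile r x ξ) i z) := by
  classical
  unfold expReward
  apply continuous_finset_sum
  intro a _
  apply Continuous.mul continuous_const
  apply continuous_finset_prod
  intro j _
  by_cases hj : j = i
  · subst hj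
    simp only [Function.update_self]
    exact continuous_const
  · simp only [Function.update_of_ne hj]
    exact cont_w r x j (a j)

private lemma cont_exp' (r : Fin n → (∀ i, A i) → ℝ) (x : ∀ j, A j → ℝ) (k : Fin n) :
    Continuous fun ξ : ℝ => expReward r k (wProfile r x ξ) := by
  unfold expReward
  apply continuous_finset_sum
  intro a _
  exact Continuous.mul continuous_const (continuous_finset_prod _ fun j _ => cont_w r x j (a j))

theorem wProfile_in_noBetter_for_small_xi [∀ i, Nonempty (A i)]
    (r : Fin n → (∀ i, A i) → ℝ) (x : ∀ j, A j → ℝ) (hx : IsProfile x) :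
    ∃ ξbar : ℝ, 0 < ξbar ∧ ∀ ξ : ℝ, 0 < ξ → ξ < ξbar →
      wProfile r x ξ ∈ NoBetter r x ∧
      ∀ i ∈ UnSat r x,
        ¬ IsBestResponse r i (wProfile r x ξ i) (wProfile r x ξ) ∧
        ∀ a : A i, 0 < wProfile r x ξ i a := by
  classical
  have key : ∀ i : Fin n, ∃ δ : ℝ, 0 < δ ∧
      (¬ IsBestResponse r i (x i) x →
        ∀ ξ : ℝ, 0 < ξ → ξ < δ →
          ¬ IsBestResponse r i (wProfile r x ξ i) (wProfile r x ξ)) := by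
    intro i
    by_cases hi : IsBestResponse r i (x i) x
    · exact ⟨1, one_pos, fun h => absurd hi h⟩
    · have hz : ∃ z ∈ stdSimplex ℝ (A i),
          expReward r i x < expReward r i (Function.update x i z) := by
        by_contra h
        push_neg at h
        refine hi ⟨hx i, fun z hzmem => ?_⟩
        have := h z hzmem
        rwa [Function.update_eq_self]
      obtain ⟨z, hzmem, hzgt⟩ := hz
      set F : ℝ → ℝ := fun ξ =>
        expReward r i (Function.update (wProfile r x ξ) i z) - expReward r i (wProfile r x ξ)
        with hF_def
      have hFcont : Continuous F := (cont_exp r x i i z).sub (cont_exp' r x i)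
      have hF0 : 0 < F 0 := by
        simp only [hF_def, wProfile_zero]
        linarith
      have hmem : Set.Ioi (0:ℝ) ∈ nhds (F 0) := isOpen_Ioi.mem_nhds hF0
      have hpre : F ⁻¹' Set.Ioi 0 ∈ nhds (0:ℝ) :=
        hFcont.continuousAt.preimage_mem_nhds hmem
      obtain ⟨δ, hδpos, hδ⟩ := Metric.mem_nhds_iff.mp hpre
      refine ⟨δ, hδpos, fun _ ξ hξ0 hξδ => ?_⟩
      have hξmem : ξ ∈ Metric.ball (0:ℝ) δ := by
        simp [Real.dist_eq, abs_of_pos hξ0, hξδ]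
      have hFξ : 0 < F ξ := hδ hξmem
      intro hbr
      have := hbr.2 z hzmem
      rw [Function.update_eq_self] at this
      simp only [hF_def] at hFξ
      linarith
  choose δ hδpos hδ using key
  set s : Finset ℝ := insert (1:ℝ) (Finset.univ.image δ) with hs
  have hsne : s.Nonempty := ⟨1, Finset.mem_insert_self _ _⟩
  refine ⟨s.min' hsne, ?_, ?_⟩
  · rw [Finset.lt_min'_iff]
    intro y hy
    rcases Finset.mem_insert.mp hy with h | h
    · rw [h]; exact one_pos
    · obtain ⟨j, _, rfl⟩ := Finset.mem_image.mp h
      exact hδpos j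
  · intro ξ hξ0 hξbar
    have hξ1 : ξ < 1 := lt_of_lt_of_le hξbar (Finset.min'_le _ _ (Finset.mem_insert_self _ _))
    have hξδ : ∀ j, ξ < δ j := fun j =>
      lt_of_lt_of_le hξbar (Finset.min'_le _ _ (Finset.mem_insert_of_mem
        (Finset.mem_image_of_mem δ (Finset.mem_univ j))))
    have hunsat : ∀ i ∈ UnSat r x,
        ¬ IsBestResponse r i (wProfile r x ξ i) (wProfile r x ξ) := by
      intro i hi
      have hi' : ¬ IsBestResponse r i (x i) x := hi
      exact hδ i hi' ξ hξ0 (hξδ i)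
    have hw : IsProfile (wProfile r x ξ) := by
      intro j
      unfold wProfile
      by_cases hj : IsBestResponse r j (x j) x
      · simpa [hj] using hx j
      · simp only [hj, if_false]
        have hcard : (0:ℝ) < (Fintype.card (A j) : ℝ) := by
          exact_mod_cast Fintype.card_pos
        constructor
        · intro a
          have h1 : (0:ℝ) ≤ (1 - ξ) * x j a :=
            mul_nonneg (by linarith) ((hx j).1 a)
          have h2 : (0:ℝ) ≤ ξ * ((Fintype.card (A j) : ℝ))⁻¹ :=
            mul_nonneg hξ0.le (inv_nonneg.mpr hcard.le)
          linarith
        · have hsum : ∑ a : A j, x j a = 1 := (hx j).2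
          rw [Finset.sum_add_distrib, ← Finset.mul_sum, hsum, Finset.sum_const,
            nsmul_eq_mul, Finset.card_univ]
          field_simp
          ring
    have hpos : ∀ i ∈ UnSat r x, ∀ a : A i, 0 < wProfile r x ξ i a := by
      intro i hi a
      have hi' : ¬ IsBestResponse r i (x i) x := hi
      have hcard : (0:ℝ) < (Fintype.card (A i) : ℝ) := by
        exact_mod_cast Fintype.card_pos
      have h1 : (0:ℝ) ≤ (1 - ξ) * x i a := mul_nonneg (by linarith) ((hx i).1 a)
      have h2 : (0:ℝ) < ξ * ((Fintype.card (A i) : ℝ))⁻¹ :=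
        mul_pos hξ0 (inv_pos.mpr hcard)
      simp only [wProfile, hi', if_false]
      linarith
    refine ⟨⟨⟨hw, ?_⟩, hunsat⟩, fun i hi => ⟨hunsat i hi, hpos i hi⟩⟩
    intro j hj
    have hj' : IsBestResponse r j (x j) x := hj
    simp [wProfile, hj']
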